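/- Let h : I → ℝ be a continuous positive function on a connected, locally connected topological space I attaining its lower bound at v ∈ I. Define λ(y,z) = sup{λ ≤ min(h(y),h(z)) : C_{y,λ} = C_{z,λ}}, where C_{x,λ} is the connected component of {h ≥ λ} containing x. Then d(x,y) = h(x) + h(y) − 2λ(x,y) is a pseudometric on I, and the quotient metric space (Ĩ, d) is an ℝ-tree. -/

import Mathlib

set_option linter.unusedSectionVars false
set_option linter.unusedVariables false
set_option maxHeartbeats 2000000


open Set

universe u

/-- `C_{x,λ}`: the connected component of `x` in `{y : h y ≥ λ}`. -/
def contourComp {I : Type u} [TopologicalSpace I] (h : I → ℝ) (x : I) (l : ℝ) : Set I :=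
  connectedComponentIn {y | l ≤ h y} x

/-- `λ(y,z) = sup{λ ≤ min(h y, h z) : C_{y,λ} = C_{z,λ}}`. -/
noncomputable def contourLam {I : Type u} [TopologicalSpace I] (h : I → ℝ) (y z : I) : ℝ :=
  sSup {l : ℝ | l ≤ min (h y) (h z) ∧ contourComp h y l = contourComp h z l}

/-- An `ℝ`-tree: a metric space that is uniquely arcwise connected, with the arc between any
two points isometric to a real interval.  Here, for all `x y` there is a map `f` isometric
from `[0, dist x y]` onto an arc from `x` to `y`, and any injective continuous path from `x`
to `y` has the same image as this arc. -/
def IsRTree (T : Type u) [MetricSpace T] : Prop :=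
  ∀ x y : T, ∃ f : ℝ → T,
    (∀ a ∈ Set.Icc 0 (dist x y), ∀ b ∈ Set.Icc 0 (dist x y), dist (f a) (f b) = |a - b|) ∧
    f 0 = x ∧ f (dist x y) = y ∧
    ∀ (γ : ℝ → T) (u v : ℝ), u ≤ v → ContinuousOn γ (Set.Icc u v) →
      γ u = x → γ v = y → Set.InjOn γ (Set.Icc u v) →
      γ '' Set.Icc u v = f '' Set.Icc 0 (dist x y)

section ISide

variable {I : Type u} [TopologicalSpace I] [ConnectedSpace I] [LocallyConnectedSpace I]
  (h : I → ℝ) (hc : Continuous h) (v : I) (hmin : ∀ x, h v ≤ h x)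

include hmin in
lemma contour_set_nonempty (x y : I) :
    (h v) ∈ {l : ℝ | l ≤ min (h x) (h y) ∧ contourComp h x l = contourComp h y l} := by
  constructor
  · exact le_min (hmin x) (hmin y)
  · have huniv : {z : I | h v ≤ h z} = univ := eq_univ_of_forall fun z => hmin z
    simp only [contourComp, huniv, connectedComponentIn_univ,
      PreconnectedSpace.connectedComponent_eq_univ]

lemma contour_set_bdd (x y : I) :
    BddAbove {l : ℝ | l ≤ min (h x) (h y) ∧ contourComp h x l = contourComp h y l} :=
  ⟨min (h x) (h y), fun _ hl => hl.1⟩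

lemma contour_set_down {x y : I} {l l' : ℝ} (hle : l' ≤ l)
    (hl : l ∈ {l : ℝ | l ≤ min (h x) (h y) ∧ contourComp h x l = contourComp h y l}) :
    l' ∈ {l : ℝ | l ≤ min (h x) (h y) ∧ contourComp h x l = contourComp h y l} := by
  obtain ⟨hl1, hl2⟩ := hl
  refine ⟨hle.trans hl1, ?_⟩
  have hsub : {z : I | l ≤ h z} ⊆ {z : I | l' ≤ h z} := fun z hz => hle.trans hz
  have hy : y ∈ contourComp h x l := by
    rw [hl2]
    exact mem_connectedComponentIn (le_trans hl1 (min_le_right _ _))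
  have hy' : y ∈ contourComp h x l' :=
    connectedComponentIn_mono _ hsub hy
  exact connectedComponentIn_eq hy'

include v hmin in
lemma lam_le_min (x y : I) : contourLam h x y ≤ min (h x) (h y) :=
  csSup_le ⟨_, contour_set_nonempty h v hmin x y⟩ fun _ hl => hl.1

include hmin in
lemma hv_le_lam (x y : I) : h v ≤ contourLam h x y :=
  le_csSup (contour_set_bdd h x y) (contour_set_nonempty h v hmin x y)

include v hmin in
lemma lam_self (x : I) : contourLam h x x = h x := by
  apply le_antisymm
  · simpa using lam_le_min h v hmin x x
  · exact le_csSup (contour_set_bdd h x x) ⟨by simp, rfl⟩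

lemma lam_comm (x y : I) : contourLam h x y = contourLam h y x := by
  unfold contourLam
  congr 1
  ext l
  constructor
  · rintro ⟨h1, h2⟩; exact ⟨by rwa [min_comm], h2.symm⟩
  · rintro ⟨h1, h2⟩; exact ⟨by rwa [min_comm], h2.symm⟩

include v hmin in
lemma lt_lam_mem {x y : I} {l : ℝ} (hl : l < contourLam h x y) :
    l ∈ {l : ℝ | l ≤ min (h x) (h y) ∧ contourComp h x l = contourComp h y l} := by
  obtain ⟨l', hl', hll'⟩ := exists_lt_of_lt_csSup ⟨_, contour_set_nonempty h v hmin x y⟩ hl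
  exact contour_set_down h hll'.le hl'

include v hmin in
lemma lam_min_ineq (x z y : I) :
    min (contourLam h x z) (contourLam h z y) ≤ contourLam h x y := by
  by_contra hcon
  push_neg at hcon
  obtain ⟨l, hl1, hl2⟩ := exists_between hcon
  have hlxz := lt_of_lt_of_le hl2 (min_le_left _ _)
  have hlzy := lt_of_lt_of_le hl2 (min_le_right _ _)
  have h1 := lt_lam_mem h v hmin hlxz
  have h2 := lt_lam_mem h v hmin hlzy
  have : l ∈ {l : ℝ | l ≤ min (h x) (h y) ∧ contourComp h x l = contourComp h y l} := by
    refine ⟨le_min (le_trans h1.1 (min_le_left _ _)) (le_trans h2.1 (min_le_right _ _)), ?_⟩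
    rw [h1.2, h2.2]
  exact absurd (le_csSup (contour_set_bdd h x y) this) (not_le.mpr hl1)

include hc in
lemma isClosed_contourComp (x : I) (l : ℝ) : IsClosed (contourComp h x l) := by
  by_cases hx : x ∈ {z : I | l ≤ h z}
  · rw [contourComp, connectedComponentIn_eq_image hx]
    have hF : IsClosed {z : I | l ≤ h z} := isClosed_le continuous_const hc
    exact (hF.isClosedEmbedding_subtypeVal).isClosedMap _ isClosed_connectedComponent
  · rw [contourComp, connectedComponentIn_eq_empty hx]
    exact isClosed_empty

include hc hmin in
lemma exists_anc (x y : I) (l : ℝ) (h1 : contourLam h x y ≤ l) (h2 : l ≤ h x) :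
    ∃ p, h p = l ∧ contourLam h x p = l := by
  have hvl : h v ≤ l := le_trans (hv_le_lam h v hmin x y) h1
  have hxF : x ∈ {z : I | l ≤ h z} := h2
  have hxC : x ∈ contourComp h x l := mem_connectedComponentIn hxF
  -- find p in the component with h p = l
  have hex : ∃ p ∈ contourComp h x l, h p = l := by
    by_contra hcon
    push_neg at hcon
    have hlt : ∀ p ∈ contourComp h x l, l < h p := fun p hp =>
      lt_of_le_of_ne (connectedComponentIn_subset {z : I | l ≤ h z} x hp) (Ne.symm (hcon p hp))
    have hopen : IsOpen (contourComp h x l) := by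
      rw [isOpen_iff_mem_nhds]
      intro p hp
      have hFnhds : {z : I | l ≤ h z} ∈ nhds p := by
        refine Filter.mem_of_superset ((isOpen_lt continuous_const hc).mem_nhds (hlt p hp))
          fun z hz => show l ≤ h z from le_of_lt hz
      have hm := connectedComponentIn_mem_nhds hFnhds
      rwa [show contourComp h x l = connectedComponentIn {z : I | l ≤ h z} p from
        connectedComponentIn_eq hp]
    have huniv : contourComp h x l = univ :=
      IsClopen.eq_univ ⟨isClosed_contourComp h hc x l, hopen⟩ ⟨x, hxC⟩
    have : l < h v := hlt v (huniv ▸ mem_univ v)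
    exact absurd hvl (not_le.mpr this)
  obtain ⟨p, hpC, hpl⟩ := hex
  refine ⟨p, hpl, le_antisymm ?_ ?_⟩
  · have hm := lam_le_min h v hmin x p
    rw [hpl] at hm
    exact hm.trans (min_le_right _ _)
  · refine le_csSup (contour_set_bdd h x p) ⟨le_min h2 (le_of_eq hpl.symm), ?_⟩
    exact connectedComponentIn_eq hpC

end ISide




section Abstract

variable {T : Type u} [MetricSpace T] {H : T → ℝ} {L : T → T → ℝ}
  (hsym : ∀ x y, L x y = L y x)
  (hself : ∀ x, L x x = H x)
  (hle : ∀ x y, L x y ≤ H y)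
  (hmin : ∀ x y z, min (L x z) (L z y) ≤ L x y)
  (hdist : ∀ x y, dist x y = H x + H y - 2 * L x y)
  (hanc : ∀ x y l, L x y ≤ l → l ≤ H x → ∃ p, H p = l ∧ L x p = l)

include hsym hle in
lemma hle' (x y : T) : L x y ≤ H x := by rw [hsym]; exact hle y x

include hdist in
lemma eq_of_L {p q : T} (h1 : H p ≤ L p q) (h2 : H q ≤ L p q) : p = q := by
  apply eq_of_dist_eq_zero
  refine le_antisymm ?_ dist_nonneg
  rw [hdist]; linarith

include hsym hle hdist in
lemma Hcont : Continuous H := by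
  refine LipschitzWith.continuous (K := 1) (LipschitzWith.of_dist_le_mul fun a b => ?_)
  rw [Real.dist_eq, NNReal.coe_one, one_mul]
  rw [abs_le]
  have h1 := hle' hsym hle a b
  have h2 := hle a b
  have h3 := hdist a b
  constructor <;> linarith

include hsym hle hdist in
lemma Lcont (a : T) : Continuous (fun z => L z a) := by
  have heq : (fun z : T => L z a) = fun z => (H z + H a - dist z a) / 2 := by
    funext z; rw [hdist]; ring
  rw [heq]
  exact (((Hcont hsym hle hdist).add continuous_const).sub
    (continuous_id.dist continuous_const)).div_const 2

include hsym hself hle hmin hdist in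
lemma seg_mem (a b p : T) {γ : ℝ → T} {u v : ℝ} (huv : u ≤ v)
    (hγ : ContinuousOn γ (Icc u v)) (hu : γ u = a) (hv : γ v = b)
    (hp1 : L a p = H p) (hp2 : L a b < H p) :
    ∃ t ∈ Icc u v, γ t = p := by
  set c := H p with hc
  set A := Icc u v ∩ (fun t => L (γ t) a) ⁻¹' Ici c with hA
  have hLγ : ContinuousOn (fun t => L (γ t) a) (Icc u v) :=
    (Lcont hsym hle hdist a).comp_continuousOn hγ
  have hAu : u ∈ A := by
    refine ⟨⟨le_refl u, huv⟩, ?_⟩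
    simp only [mem_preimage, mem_Ici, hu, hself]
    rw [← hp1]; exact hle' hsym hle a p
  have hAclosed : IsClosed A :=
    hLγ.preimage_isClosed_of_isClosed isClosed_Icc isClosed_Ici
  have hAbdd : BddAbove A := ⟨v, fun t ht => ht.1.2⟩
  set t₀ := sSup A with ht₀
  have ht₀A : t₀ ∈ A := hAclosed.csSup_mem ⟨u, hAu⟩ hAbdd
  have ht₀I : t₀ ∈ Icc u v := ht₀A.1
  have ht₀L : c ≤ L (γ t₀) a := ht₀A.2
  have hHub : H (γ t₀) ≤ c := by
    by_contra hcon
    push_neg at hcon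
    have ht₀v : t₀ < v := by
      rcases lt_or_eq_of_le ht₀I.2 with hlt | heq
      · exact hlt
      · exfalso
        rw [heq, hv, hsym b a] at ht₀L
        exact absurd ht₀L (not_le.mpr hp2)
    set ε := H (γ t₀) - c with hε
    have hεpos : 0 < ε := sub_pos.mpr hcon
    have hγt₀ : ContinuousWithinAt γ (Icc u v) t₀ := hγ t₀ ht₀I
    have hev1 : ∀ᶠ t in nhdsWithin t₀ (Icc u v), dist (γ t) (γ t₀) < ε := by
      have := Metric.tendsto_nhds.mp hγt₀.tendsto
      exact this ε hεpos
    have hev2 : ∀ᶠ t in nhdsWithin t₀ (Icc u v), c < H (γ t) := by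
      have hHγ : ContinuousWithinAt (fun t => H (γ t)) (Icc u v) t₀ :=
        ((Hcont hsym hle hdist).comp_continuousOn hγ) t₀ ht₀I
      exact hHγ.tendsto.eventually (eventually_gt_nhds hcon)
    have hsub : Ioc t₀ v ⊆ Icc u v := fun t ht => ⟨ht₀I.1.trans ht.1.le, ht.2⟩
    have hne : (nhdsWithin t₀ (Ioc t₀ v)).NeBot := by
      rw [← mem_closure_iff_nhdsWithin_neBot, closure_Ioc (ne_of_lt ht₀v)]
      exact ⟨le_refl _, le_of_lt ht₀v⟩
    have hev : ∀ᶠ t in nhdsWithin t₀ (Ioc t₀ v),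
        (dist (γ t) (γ t₀) < ε ∧ c < H (γ t)) ∧ t ∈ Ioc t₀ v :=
      ((hev1.and hev2).filter_mono (nhdsWithin_mono _ hsub)).and
        eventually_mem_nhdsWithin
    obtain ⟨t, ⟨hdt, hHt⟩, htIoc⟩ := hev.exists
    have htnA : L (γ t) a < c := by
      by_contra hq
      push_neg at hq
      have htA : t ∈ A := ⟨hsub htIoc, hq⟩
      exact absurd (le_csSup hAbdd htA) (not_le.mpr htIoc.1)
    have hLtt : L (γ t) (γ t₀) < c := by
      by_contra hq
      push_neg at hq
      have hmm := hmin (γ t) a (γ t₀)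
      exact absurd (le_trans (le_min hq ht₀L) hmm) (not_le.mpr htnA)
    have : ε < dist (γ t) (γ t₀) := by
      rw [hdist]
      have : H (γ t₀) = c + ε := by rw [hε]; ring
      linarith
    linarith
  have hH : H (γ t₀) = c :=
    le_antisymm hHub (le_trans ht₀L (hle' hsym hle (γ t₀) a))
  refine ⟨t₀, ht₀I, ?_⟩
  have h1 : c ≤ L (γ t₀) p := le_trans (le_min ht₀L hp1.ge) (hmin (γ t₀) p a)
  exact eq_of_L hdist (le_of_eq_of_le hH h1) h1

include hsym hself hle hmin hdist hanc in
lemma seg_mem_closure (a b p : T) {γ : ℝ → T} {u v : ℝ} (huv : u ≤ v)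
    (hγ : ContinuousOn γ (Icc u v)) (hu : γ u = a) (hv : γ v = b)
    (hp1 : L a p = H p) (hp2 : L a b ≤ H p) :
    p ∈ γ '' Icc u v := by
  have himg : IsCompact (γ '' Icc u v) := isCompact_Icc.image_of_continuousOn hγ
  have hclosed : IsClosed (γ '' Icc u v) := himg.isClosed
  rw [← hclosed.closure_eq, Metric.mem_closure_iff]
  intro ε hεpos
  rcases lt_or_eq_of_le hp2 with hlt | heq
  · obtain ⟨t, ht, hγt⟩ := seg_mem hsym hself hle hmin hdist a b p huv hγ hu hv hp1 hlt
    exact ⟨p, ⟨t, ht, hγt⟩, by simp [hεpos]⟩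
  · -- L a b = H p
    have hpa : H p ≤ H a := by rw [← hp1]; exact hle' hsym hle a p
    rcases lt_or_eq_of_le hpa with hlt2 | heq2
    · -- H p < H a
      set l := min (H a) (H p + ε / 2) with hl
      have hll : H p < l := lt_min hlt2 (by linarith)
      have hlha : l ≤ H a := min_le_left _ _
      have hab : L a b ≤ l := by rw [heq]; exact le_of_lt hll
      obtain ⟨q, hq1, hq2⟩ := hanc a b l hab hlha
      have hq3 : L a q = H q := by rw [hq1, hq2]
      obtain ⟨t, ht, hγt⟩ := seg_mem hsym hself hle hmin hdist a b q huv hγ hu hv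
        hq3 (by rw [hq1, heq]; exact hll)
      refine ⟨γ t, ⟨t, ht, rfl⟩, ?_⟩
      rw [hγt]
      -- L p q = H p
      have hLpq : L p q = H p := by
        refine le_antisymm ?_ ?_
        · rw [hsym p q]
          exact hle q p
        · have hmm := hmin p q a
          rw [hsym p a, hp1] at hmm
          have h1 : H p ≤ L a q := by rw [hq2]; exact le_of_lt hll
          exact le_trans (le_min (le_refl _) h1) hmm
      rw [hdist, hLpq, hq1]
      have h4 : l ≤ H p + ε / 2 := min_le_right _ _
      linarith
    · -- H p = H a, so p = a
      have hpa2 : p = a := by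
        refine eq_of_L hdist ?_ ?_
        · rw [hsym, hp1]
        · rw [hsym, hp1, heq2]
      exact ⟨a, ⟨u, ⟨le_refl u, huv⟩, hu⟩, by rw [hpa2]; simpa using hεpos⟩

include hsym hself hle hmin hdist hanc in
theorem isRTree_of_height : IsRTree T := by
  intro x y
  classical
  have hanc2 := hanc
  choose F hF1 hF2 using hanc2
  set m := L x y with hm
  have hmx : m ≤ H x := hle' hsym hle x y
  have hmy : m ≤ H y := hle x y
  have hDd : dist x y = H x + H y - 2 * m := hdist x y
  have hD0 : (0:ℝ) ≤ dist x y := dist_nonneg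
  -- the ancestor function
  set anc : T → T → ℝ → T := fun a b l =>
    if hl : L a b ≤ l ∧ l ≤ H a then F a b l hl.1 hl.2 else a with hanc_def
  have hancP : ∀ a b l, L a b ≤ l → l ≤ H a →
      H (anc a b l) = l ∧ L a (anc a b l) = l := by
    intro a b l h1 h2
    simp only [hanc_def, dif_pos (⟨h1, h2⟩ : L a b ≤ l ∧ l ≤ H a)]
    exact ⟨hF1 a b l h1 h2, hF2 a b l h1 h2⟩
  -- the geodesic
  set f : ℝ → T := fun t =>
    if t ≤ H x - m then anc x y (H x - t) else anc y x (t - H x + 2 * m) with hf_def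
  have hyx : L y x = m := by rw [hsym y x, ← hm]
  have hf : ∀ t ∈ Icc 0 (dist x y),
      (t ≤ H x - m ∧ H (f t) = H x - t ∧ L x (f t) = H x - t) ∨
      (H x - m ≤ t ∧ H (f t) = t - H x + 2 * m ∧ L y (f t) = t - H x + 2 * m) := by
    intro t ht
    by_cases htb : t ≤ H x - m
    · left
      refine ⟨htb, ?_⟩
      have h1 : L x y ≤ H x - t := by linarith
      have h2 : H x - t ≤ H x := by linarith [ht.1]
      have := hancP x y (H x - t) h1 h2
      simpa only [hf_def, if_pos htb] using this
    · right
      push_neg at htb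
      refine ⟨htb.le, ?_⟩
      have h1 : L y x ≤ t - H x + 2 * m := by rw [hyx]; linarith
      have h2 : t - H x + 2 * m ≤ H y := by linarith [ht.2, hDd]
      have := hancP y x (t - H x + 2 * m) h1 h2
      simpa only [hf_def, if_neg (not_le.mpr htb)] using this
  -- distance between two ancestors of the same point
  have hAA : ∀ (w p q : T) (l l' : ℝ), H p = l → L w p = l → H q = l' → L w q = l' →
      dist p q = |l - l'| := by
    have key : ∀ (w p q : T) (l l' : ℝ), l ≤ l' → H p = l → L w p = l → H q = l' → L w q = l' →
        dist p q = l' - l := by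
      intro w p q l l' hll' hp1 hp2 hq1 hq2
      have hLpq : L p q = l := by
        refine le_antisymm (by rw [← hp1]; exact hle' hsym hle p q) ?_
        have hmm := hmin p q w
        rw [hsym p w, hp2, hq2] at hmm
        rwa [min_eq_left hll'] at hmm
      rw [hdist, hp1, hq1, hLpq]; ring
    intro w p q l l' hp1 hp2 hq1 hq2
    rcases le_total l l' with hll' | hll'
    · rw [key w p q l l' hll' hp1 hp2 hq1 hq2, abs_of_nonpos (by linarith)]; ring
    · rw [dist_comm, key w q p l' l hll' hq1 hq2 hp1 hp2, abs_of_nonneg (by linarith)]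
  -- distance across the two branches
  have hcross : ∀ (p q : T) (l l' : ℝ), H p = l → L x p = l → H q = l' → L y q = l' →
      m ≤ l → m ≤ l' → dist p q = l + l' - 2 * m := by
    intro p q l l' hp1 hp2 hq1 hq2 hml hml'
    have hxq : m ≤ L x q := by
      have hmm := hmin x q y
      rw [hq2] at hmm
      exact le_trans (le_min (le_refl m) hml') hmm
    have hLpq : L p q = m := by
      refine le_antisymm ?_ ?_
      · by_contra hcon
        push_neg at hcon
        rcases eq_or_lt_of_le hml with heq | hlt
        · have hup := hle' hsym hle p q
          rw [hp1, ← heq] at hup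
          linarith
        · have h1 : m < L x q := by
            have hmm := hmin x q p
            rw [hp2] at hmm
            exact lt_of_lt_of_le (lt_min hlt hcon) hmm
          have h2 : m < l' := lt_of_lt_of_le h1 (by rw [← hq1]; exact hle x q)
          have hmm := hmin x y q
          rw [hsym q y, hq2, ← hm] at hmm
          exact absurd hmm (not_le.mpr (lt_min h1 h2))
      · have hmm := hmin p q x
        rw [hsym p x, hp2] at hmm
        exact le_trans (le_min hml hxq) hmm
    rw [hdist, hp1, hq1, hLpq]
  -- a helper to prove equality of points
  have heqL : ∀ p q : T, H p ≤ L p q → H q ≤ L p q → p = q := fun p q h1 h2 =>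
    eq_of_L hdist h1 h2
  refine ⟨f, ?_, ?_, ?_, ?_⟩
  · -- isometry
    intro a ha b hb
    rcases hf a ha with ⟨ha1, ha2, ha3⟩ | ⟨ha1, ha2, ha3⟩ <;>
      rcases hf b hb with ⟨hb1, hb2, hb3⟩ | ⟨hb1, hb2, hb3⟩
    · rw [hAA x (f a) (f b) (H x - a) (H x - b) ha2 ha3 hb2 hb3]
      rw [show H x - a - (H x - b) = -(a - b) by ring, abs_neg]
    · rw [hcross (f a) (f b) (H x - a) (b - H x + 2 * m) ha2 ha3 hb2 hb3
        (by linarith) (by linarith)]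
      rw [abs_of_nonpos (by linarith)]
      ring
    · rw [dist_comm]
      rw [hcross (f b) (f a) (H x - b) (a - H x + 2 * m) hb2 hb3 ha2 ha3
        (by linarith) (by linarith)]
      rw [abs_of_nonneg (by linarith)]
      ring
    · rw [hAA y (f a) (f b) (a - H x + 2 * m) (b - H x + 2 * m) ha2 ha3 hb2 hb3]
      congr 1
      ring
  · -- f 0 = x
    rcases hf 0 ⟨le_refl 0, hD0⟩ with ⟨h1, h2, h3⟩ | ⟨h1, h2, h3⟩
    · refine heqL (f 0) x ?_ ?_
      · rw [hsym (f 0) x, h3, h2]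
      · rw [hsym (f 0) x, h3]; linarith
    · -- H x - m ≤ 0, so H x = m
      have hxm : H x = m := le_antisymm (by linarith) hmx
      have hHf : H (f 0) = m := by rw [h2, hxm]; ring
      have hLyf : L y (f 0) = m := by rw [h3, hxm]; ring
      have hLxf : m ≤ L x (f 0) := by
        have hmm := hmin x (f 0) y
        rw [hLyf, ← hm] at hmm
        exact le_trans (le_min (le_refl m) (le_refl m)) hmm
      refine heqL (f 0) x ?_ ?_
      · rw [hsym (f 0) x]; linarith
      · rw [hsym (f 0) x]; linarith
  · -- f (dist x y) = y
    rcases hf (dist x y) ⟨hD0, le_refl _⟩ with ⟨h1, h2, h3⟩ | ⟨h1, h2, h3⟩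
    · -- dist x y ≤ H x - m forces H y = m
      have hym : H y = m := le_antisymm (by linarith) hmy
      have hHf : H (f (dist x y)) = m := by rw [h2, hDd, hym]; ring
      have hLxf : L x (f (dist x y)) = m := by rw [h3, hDd, hym]; ring
      have hLyf : m ≤ L y (f (dist x y)) := by
        have hmm := hmin y (f (dist x y)) x
        rw [hyx, hLxf] at hmm
        exact le_trans (le_min (le_refl m) (le_refl m)) hmm
      refine heqL (f (dist x y)) y ?_ ?_
      · rw [hsym (f (dist x y)) y, hHf]; exact hLyf
      · rw [hsym (f (dist x y)) y, hym]; exact hLyf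
    · have hHf : H (f (dist x y)) = H y := by rw [h2, hDd]; ring
      have hLyf : L y (f (dist x y)) = H y := by rw [h3, hDd]; ring
      refine heqL (f (dist x y)) y ?_ ?_
      · rw [hsym (f (dist x y)) y, hLyf, hHf]
      · rw [hsym (f (dist x y)) y, hLyf]
  · -- uniqueness of arcs
    intro γ u v huv hγ hγu hγv hinj
    set S : Set T := {z | m ≤ H z ∧ (L x z = H z ∨ L y z = H z)} with hS_def
    have hfS : ∀ t ∈ Icc 0 (dist x y), f t ∈ S := by
      intro t ht
      rcases hf t ht with ⟨h1, h2, h3⟩ | ⟨h1, h2, h3⟩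
      · exact ⟨by rw [h2]; linarith, Or.inl (by rw [h2, h3])⟩
      · exact ⟨by rw [h2]; linarith, Or.inr (by rw [h2, h3])⟩
    have hSf : ∀ z ∈ S, ∃ t ∈ Icc 0 (dist x y), f t = z := by
      rintro z ⟨hz1, hz2⟩
      rcases hz2 with hz2 | hz2
      · have hzx : H z ≤ H x := by rw [← hz2]; exact hle' hsym hle x z
        have htI : H x - H z ∈ Icc (0:ℝ) (dist x y) := ⟨by linarith, by linarith⟩
        refine ⟨H x - H z, htI, ?_⟩
        rcases hf (H x - H z) htI with ⟨h1, h2, h3⟩ | ⟨h1, h2, h3⟩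
        · have h2' : H (f (H x - H z)) = H z := by rw [h2]; ring
          have h3' : L x (f (H x - H z)) = H z := by rw [h3]; ring
          have hzf : H z ≤ L (f (H x - H z)) z := by
            have hmm := hmin (f (H x - H z)) z x
            have e1 : H z ≤ L (f (H x - H z)) x := by rw [hsym _ x, h3']
            have e2 : H z ≤ L x z := hz2.ge
            exact le_trans (le_min e1 e2) hmm
          exact heqL _ _ (by rw [h2']; exact hzf) hzf
        · have hzm : H z = m := le_antisymm (by linarith) hz1
          have h2' : H (f (H x - H z)) = m := by rw [h2, hzm]; ring
          have h3' : L y (f (H x - H z)) = m := by rw [h3, hzm]; ring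
          have hxf : m ≤ L x (f (H x - H z)) := by
            have hmm := hmin x (f (H x - H z)) y
            rw [h3', ← hm] at hmm
            simpa using hmm
          have hzf : m ≤ L (f (H x - H z)) z := by
            have hmm := hmin (f (H x - H z)) z x
            have e1 : m ≤ L (f (H x - H z)) x := by rw [hsym _ x]; exact hxf
            have e2 : m ≤ L x z := by rw [hz2, hzm]
            exact le_trans (le_min e1 e2) hmm
          exact heqL _ _ (by rw [h2']; exact hzf) (hzm.trans_le hzf)
      · have hzy : H z ≤ H y := by rw [← hz2]; exact hle' hsym hle y z
        have htI : H x + H z - 2 * m ∈ Icc (0:ℝ) (dist x y) :=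
          ⟨by linarith, by linarith⟩
        refine ⟨H x + H z - 2 * m, htI, ?_⟩
        rcases hf (H x + H z - 2 * m) htI with ⟨h1, h2, h3⟩ | ⟨h1, h2, h3⟩
        · have hzm : H z = m := le_antisymm (by linarith) hz1
          have h2' : H (f (H x + H z - 2 * m)) = m := by rw [h2, hzm]; ring
          have h3' : L x (f (H x + H z - 2 * m)) = m := by rw [h3, hzm]; ring
          have hyf : m ≤ L y (f (H x + H z - 2 * m)) := by
            have hmm := hmin y (f (H x + H z - 2 * m)) x
            rw [hyx, h3'] at hmm
            simpa using hmm
          have hzf : m ≤ L (f (H x + H z - 2 * m)) z := by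
            have hmm := hmin (f (H x + H z - 2 * m)) z y
            have e1 : m ≤ L (f (H x + H z - 2 * m)) y := by rw [hsym _ y]; exact hyf
            have e2 : m ≤ L y z := by rw [hz2, hzm]
            exact le_trans (le_min e1 e2) hmm
          exact heqL _ _ (by rw [h2']; exact hzf) (hzm.trans_le hzf)
        · have h2' : H (f (H x + H z - 2 * m)) = H z := by rw [h2]; ring
          have h3' : L y (f (H x + H z - 2 * m)) = H z := by rw [h3]; ring
          have hzf : H z ≤ L (f (H x + H z - 2 * m)) z := by
            have hmm := hmin (f (H x + H z - 2 * m)) z y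
            have e1 : H z ≤ L (f (H x + H z - 2 * m)) y := by rw [hsym _ y, h3']
            have e2 : H z ≤ L y z := hz2.ge
            exact le_trans (le_min e1 e2) hmm
          exact heqL _ _ (by rw [h2']; exact hzf) hzf
    have hSγ : ∀ z ∈ S, z ∈ γ '' Icc u v := by
      rintro z ⟨hz1, hz2⟩
      rcases hz2 with hz2 | hz2
      · exact seg_mem_closure hsym hself hle hmin hdist hanc x y z huv hγ hγu hγv hz2
          (by rw [← hm]; exact hz1)
      · have hδ : ContinuousOn (fun s => γ (u + v - s)) (Icc u v) := by
          apply hγ.comp (Continuous.continuousOn (continuous_const.sub continuous_id))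
          intro s hs
          exact ⟨by simp only [Pi.sub_apply, id_eq]; linarith [hs.2], by simp only [Pi.sub_apply, id_eq]; linarith [hs.1]⟩
        have hmem := seg_mem_closure hsym hself hle hmin hdist hanc y x z huv hδ
          (by show γ (u + v - u) = y; rw [show u + v - u = v by ring, hγv])
          (by show γ (u + v - v) = x; rw [show u + v - v = u by ring, hγu])
          hz2 (by rw [hyx]; exact hz1)
        obtain ⟨s, hs, hzs⟩ := hmem
        exact ⟨u + v - s, ⟨by linarith [hs.2], by linarith [hs.1]⟩, hzs⟩
    have hγS : ∀ t ∈ Icc u v, γ t ∈ S := by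
      intro t0 ht0
      by_contra hzS
      set z := γ t0 with hz_def
      have hcontr : ∀ q : T, q ≠ z → q ∈ γ '' Icc u t0 → q ∈ γ '' Icc t0 v → False := by
        rintro q hqz ⟨t1, ht1, hq1⟩ ⟨t2, ht2, hq2⟩
        have ht1I : t1 ∈ Icc u v := ⟨ht1.1, ht1.2.trans ht0.2⟩
        have ht2I : t2 ∈ Icc u v := ⟨ht0.1.trans ht2.1, ht2.2⟩
        have h12 : t1 = t2 := hinj ht1I ht2I (by rw [hq1, hq2])
        have ht10 : t1 = t0 := le_antisymm ht1.2 (h12 ▸ ht2.1)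
        exact hqz (by rw [← hq1, ht10])
      have hγ1 : ContinuousOn γ (Icc u t0) := hγ.mono (Icc_subset_Icc le_rfl ht0.2)
      have hγ2 : ContinuousOn γ (Icc t0 v) := hγ.mono (Icc_subset_Icc ht0.1 le_rfl)
      by_cases hA : max (L x z) (L y z) < H z
      · set l := (max (L x z) (L y z) + H z) / 2 with hl
        have hl1 : max (L x z) (L y z) < l := by rw [hl]; linarith
        have hl2 : l < H z := by rw [hl]; linarith
        obtain ⟨q, hq1, hq2⟩ := hanc z x l
          (by rw [hsym z x]; exact le_of_lt (lt_of_le_of_lt (le_max_left _ _) hl1)) hl2.le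
        have hqz : q ≠ z := fun he => by rw [he] at hq1; exact absurd hq1 (ne_of_lt hl2).symm
        have hq_left : q ∈ γ '' Icc u t0 := by
          have hδ : ContinuousOn (fun s => γ (u + t0 - s)) (Icc u t0) := by
            apply hγ1.comp (Continuous.continuousOn (continuous_const.sub continuous_id))
            intro s hs
            exact ⟨by simp only [Pi.sub_apply, id_eq]; linarith [hs.2], by simp only [Pi.sub_apply, id_eq]; linarith [hs.1]⟩
          have hmem := seg_mem hsym hself hle hmin hdist z x q ht0.1 hδ
            (by show γ (u + t0 - u) = z; rw [show u + t0 - u = t0 by ring])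
            (by show γ (u + t0 - t0) = x; rw [show u + t0 - t0 = u by ring, hγu])
            (by rw [hq1]; exact hq2)
            (by rw [hq1, hsym z x]; exact lt_of_le_of_lt (le_max_left _ _) hl1)
          obtain ⟨s, hs, hqs⟩ := hmem
          exact ⟨u + t0 - s, ⟨by linarith [hs.2], by linarith [hs.1]⟩, hqs⟩
        have hq_right : q ∈ γ '' Icc t0 v := by
          obtain ⟨s, hs, hqs⟩ := seg_mem hsym hself hle hmin hdist z y q ht0.2 hγ2
            hz_def.symm hγv
            (by rw [hq1]; exact hq2)
            (by rw [hq1, hsym z y]; exact lt_of_le_of_lt (le_max_right _ _) hl1)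
          exact ⟨s, hs, hqs⟩
        exact hcontr q hqz hq_left hq_right
      · push_neg at hA
        have hmax : max (L x z) (L y z) = H z := le_antisymm (max_le (hle x z) (hle y z)) hA
        have hHzm : H z < m := by
          by_contra hge
          push_neg at hge
          apply hzS
          refine ⟨hge, ?_⟩
          rcases max_cases (L x z) (L y z) with ⟨he, _⟩ | ⟨he, _⟩
          · exact Or.inl (by rw [← he]; exact hmax)
          · exact Or.inr (by rw [← he]; exact hmax)
        have hboth : L x z = H z ∧ L y z = H z := by
          rcases max_cases (L x z) (L y z) with ⟨he, hge⟩ | ⟨he, hge⟩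
          · have hxz : L x z = H z := by rw [← he]; exact hmax
            refine ⟨hxz, le_antisymm (hle y z) ?_⟩
            have hmm := hmin y z x
            rw [hyx, hxz] at hmm
            exact le_trans (le_min hHzm.le (le_refl _)) hmm
          · have hyz : L y z = H z := by rw [← he]; exact hmax
            refine ⟨le_antisymm (hle x z) ?_, hyz⟩
            have hmm := hmin x z y
            rw [hyz, ← hm] at hmm
            exact le_trans (le_min hHzm.le (le_refl _)) hmm
        set l := (H z + m) / 2 with hl
        have hla : H z < l := by rw [hl]; linarith
        have hlb : l < m := by rw [hl]; linarith
        obtain ⟨q, hq1, hq2⟩ := hanc x z l (by rw [hboth.1]; exact hla.le)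
          (by linarith)
        have hqz : q ≠ z := fun he => by rw [he] at hq1; exact absurd hq1 (ne_of_lt hla)
        have hLyq : L y q = l := by
          refine le_antisymm (by rw [← hq1]; exact hle y q) ?_
          have hmm := hmin y q x
          rw [hyx, hq2] at hmm
          exact le_trans (le_min hlb.le (le_refl l)) hmm
        have hq_left : q ∈ γ '' Icc u t0 := by
          obtain ⟨s, hs, hqs⟩ := seg_mem hsym hself hle hmin hdist x z q ht0.1 hγ1 hγu
            hz_def.symm
            (by rw [hq1]; exact hq2)
            (by rw [hq1, hboth.1]; exact hla)
          exact ⟨s, hs, hqs⟩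
        have hq_right : q ∈ γ '' Icc t0 v := by
          have hδ : ContinuousOn (fun s => γ (t0 + v - s)) (Icc t0 v) := by
            apply hγ2.comp (Continuous.continuousOn (continuous_const.sub continuous_id))
            intro s hs
            exact ⟨by simp only [Pi.sub_apply, id_eq]; linarith [hs.2], by simp only [Pi.sub_apply, id_eq]; linarith [hs.1]⟩
          have hmem := seg_mem hsym hself hle hmin hdist y z q ht0.2 hδ
            (by show γ (t0 + v - t0) = y; rw [show t0 + v - t0 = v by ring, hγv])
            (by show γ (t0 + v - v) = z; rw [show t0 + v - v = t0 by ring])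
            (by rw [hq1]; exact hLyq)
            (by rw [hq1, hboth.2]; exact hla)
          obtain ⟨s, hs, hqs⟩ := hmem
          exact ⟨t0 + v - s, ⟨by linarith [hs.2], by linarith [hs.1]⟩, hqs⟩
        exact hcontr q hqz hq_left hq_right
    ext w
    simp only [mem_image]
    constructor
    · rintro ⟨t, ht, rfl⟩
      obtain ⟨s, hs, hfs⟩ := hSf (γ t) (hγS t ht)
      exact ⟨s, hs, hfs⟩
    · rintro ⟨t, ht, rfl⟩
      obtain ⟨s, hs, hgs⟩ := hSγ (f t) (hfS t ht)
      exact ⟨s, hs, hgs⟩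

end Abstract


/-- auxiliary type synonym carrying the contour pseudometric -/
def ContourAux (I : Type u) : Type u := I


/-- Let `h : I → ℝ` be a continuous positive function on a connected,
locally connected topological space, attaining its lower bound at `v`.  With
`λ(y,z) = sup{λ ≤ min(h y, h z) : C_{y,λ} = C_{z,λ}}` (components `C` of superlevel sets),
`d(x,y) = h x + h y − 2λ(x,y)` is a pseudometric on `I`, and the associated quotient metric
space is an `ℝ`-tree. -/
theorem contour_pseudometric_rtree
    {I : Type u} [TopologicalSpace I] [ConnectedSpace I] [LocallyConnectedSpace I]
    (h : I → ℝ) (hc : Continuous h) (hpos : ∀ x, 0 < h x)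
    (v : I) (hmin : ∀ x, h v ≤ h x) :
    (∀ x, h x + h x - 2 * contourLam h x x = 0) ∧
    (∀ x y, h x + h y - 2 * contourLam h x y = h y + h x - 2 * contourLam h y x) ∧
    (∀ x y, 0 ≤ h x + h y - 2 * contourLam h x y) ∧
    (∀ x y z, h x + h y - 2 * contourLam h x y ≤
      (h x + h z - 2 * contourLam h x z) + (h z + h y - 2 * contourLam h z y)) ∧
    ∃ (T : Type u) (_ : MetricSpace T) (q : I → T), Function.Surjective q ∧
      (∀ x y, dist (q x) (q y) = h x + h y - 2 * contourLam h x y) ∧ IsRTree T := by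
  have hLself : ∀ x : I, contourLam h x x = h x := lam_self h v hmin
  have hLcomm : ∀ x y : I, contourLam h x y = contourLam h y x := lam_comm h
  have hLmin : ∀ x z y : I, min (contourLam h x z) (contourLam h z y) ≤ contourLam h x y :=
    lam_min_ineq h v hmin
  have hLle : ∀ x y : I, contourLam h x y ≤ min (h x) (h y) := lam_le_min h v hmin
  have htri : ∀ x y z : I, h x + h y - 2 * contourLam h x y ≤
      (h x + h z - 2 * contourLam h x z) + (h z + h y - 2 * contourLam h z y) := by
    intro x y z
    rcases le_total (contourLam h x z) (contourLam h z y) with hcmp | hcmp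
    · have hmm := hLmin x z y
      rw [min_eq_left hcmp] at hmm
      have h2 : contourLam h z y ≤ h z := (hLle z y).trans (min_le_left _ _)
      linarith
    · have hmm := hLmin x z y
      rw [min_eq_right hcmp] at hmm
      have h2 : contourLam h x z ≤ h z := (hLle x z).trans (min_le_right _ _)
      linarith
  refine ⟨fun x => by rw [hLself x]; ring, fun x y => by rw [hLcomm x y]; ring, ?_, htri, ?_⟩
  · intro x y
    have h1 : contourLam h x y ≤ h x := (hLle x y).trans (min_le_left _ _)
    have h2 : contourLam h x y ≤ h y := (hLle x y).trans (min_le_right _ _)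
    linarith
  · -- the quotient tree
    letI pm : PseudoMetricSpace (ContourAux I) :=
      { dist := fun a b => h a + h b - 2 * contourLam h a b
        dist_self := fun a => by rw [hLself a]; ring
        dist_comm := fun a b => by rw [hLcomm a b]; ring
        dist_triangle := fun a b c => by simpa using htri a c b }
    refine ⟨SeparationQuotient (ContourAux I), inferInstance,
      fun x => SeparationQuotient.mk (x : ContourAux I),
      fun t => ?_, fun x y => SeparationQuotient.dist_mk _ _, ?_⟩
    · obtain ⟨a, ha⟩ := SeparationQuotient.surjective_mk t
      exact ⟨a, ha⟩
    · -- IsRTree via the abstract theorem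
      set mkq : ContourAux I → SeparationQuotient (ContourAux I) := SeparationQuotient.mk
        with hmkq
      have hsurj : Function.Surjective mkq := SeparationQuotient.surjective_mk
      set Hq : SeparationQuotient (ContourAux I) → ℝ :=
        fun t => dist t (mkq v) + h v with hHq_def
      set Lq : SeparationQuotient (ContourAux I) → SeparationQuotient (ContourAux I) → ℝ :=
        fun s t => (Hq s + Hq t - dist s t) / 2 with hLq_def
      have hdistmk : ∀ x y : I, dist (mkq x) (mkq y) = h x + h y - 2 * contourLam h x y :=
        fun x y => SeparationQuotient.dist_mk _ _
      have hlamv : ∀ x : I, contourLam h x v = h v := fun x =>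
        le_antisymm ((hLle x v).trans (min_le_right _ _)) (hv_le_lam h v hmin x v)
      have hHmk : ∀ x : I, Hq (mkq x) = h x := by
        intro x
        rw [hHq_def]
        simp only
        rw [hdistmk x v, hlamv x]
        ring
      have hLmk : ∀ x y : I, Lq (mkq x) (mkq y) = contourLam h x y := by
        intro x y
        rw [hLq_def]
        simp only
        rw [hHmk, hHmk, hdistmk]
        ring
      apply isRTree_of_height (H := Hq) (L := Lq)
      · -- symmetry
        intro s t
        rw [hLq_def]
        simp only
        rw [dist_comm]
        ring
      · -- self
        intro s
        rw [hLq_def]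
        simp only
        rw [dist_self]
        ring
      · -- L ≤ H (second argument)
        intro s t
        obtain ⟨a, rfl⟩ := hsurj s
        obtain ⟨b, rfl⟩ := hsurj t
        rw [hLmk a b, hHmk b]
        exact (hLle a b).trans (min_le_right _ _)
      · -- min inequality
        intro s t w
        obtain ⟨a, rfl⟩ := hsurj s
        obtain ⟨b, rfl⟩ := hsurj t
        obtain ⟨c, rfl⟩ := hsurj w
        rw [hLmk a c, hLmk c b, hLmk a b]
        exact hLmin a c b
      · -- dist formula
        intro s t
        rw [hLq_def]
        simp only
        ring
      · -- ancestors
        intro s t l h1 h2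
        obtain ⟨a, rfl⟩ := hsurj s
        obtain ⟨b, rfl⟩ := hsurj t
        rw [hLmk a b] at h1
        rw [hHmk a] at h2
        obtain ⟨p, hp1, hp2⟩ := exists_anc h hc v hmin a b l h1 h2
        exact ⟨mkq p, by rw [hHmk, hp1], by rw [hLmk a p, hp2]⟩
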